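/- Let (Z_i)_{i=1..n} be i.i.d. samples from a distribution ℙ on a space Z, let E ⊆ Z be an event with ℙ(E) = q > 0, and let F ⊆ Z be another event. Let γ = ℙ(F | E) and let γ̂ = (#{i : Z_i ∈ E ∩ F})/(#{i : Z_i ∈ E}) with convention 0/0 = 0. Then for any t > 0, ℙ(|γ̂ − γ| > t) ≤ exp(−q·n/8) + 2·exp(−t²·q·n). -/

import Mathlib

open MeasureTheory ProbabilityTheory Finset Real
open scoped Classical


lemma hoeff_scalar {p : ℝ} (hp0 : 0 ≤ p) (hp1 : p ≤ 1) (l : ℝ) :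
    p * Real.exp l + (1 - p) ≤ Real.exp (l * p + l ^ 2 / 8) := by
  set D : ℝ → ℝ := fun x => 1 - p + p * Real.exp x with hDdef
  have hD : ∀ x, 0 < D x := by
    intro x
    rcases lt_or_ge p 1 with h | h
    · have := mul_nonneg hp0 (exp_pos x).le
      simp only [hDdef]; nlinarith
    · have hp : p = 1 := le_antisymm hp1 h
      simp only [hDdef, hp]; nlinarith [exp_pos x]
  have hD' : ∀ x, HasDerivAt D (p * Real.exp x) x := by
    intro x
    exact ((Real.hasDerivAt_exp x).const_mul p).const_add (1 - p)
  set g : ℝ → ℝ := fun x => p * x + x ^ 2 / 8 - Real.log (D x) with hgdef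
  set g' : ℝ → ℝ := fun x => p + x / 4 - p * Real.exp x / D x with hg'def
  have hg : ∀ x, HasDerivAt g (g' x) x := by
    intro x
    have h1 : HasDerivAt (fun x : ℝ => p * x) p x := by
      simpa using (hasDerivAt_id x).const_mul p
    have h2 : HasDerivAt (fun x : ℝ => x ^ 2 / 8) (x / 4) x := by
      have := (hasDerivAt_pow 2 x).div_const 8
      exact this.congr_deriv (by push_cast; ring)
    have h3 : HasDerivAt (fun x => Real.log (D x)) (p * Real.exp x / D x) x :=
      (hD' x).log (hD x).ne'
    exact (h1.add h2).sub h3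
  have hg' : ∀ x, HasDerivAt g' (1 / 4 - p * Real.exp x * (1 - p) / (D x) ^ 2) x := by
    intro x
    have h1 : HasDerivAt (fun x : ℝ => p + x / 4) (1 / 4) x := by
      simpa using ((hasDerivAt_id x).div_const 4).const_add p
    have h2 : HasDerivAt (fun x => p * Real.exp x / D x)
        ((p * Real.exp x * D x - p * Real.exp x * (p * Real.exp x)) / (D x) ^ 2) x :=
      ((Real.hasDerivAt_exp x).const_mul p).div (hD' x) (hD x).ne'
    have := h1.sub h2
    refine this.congr_deriv ?_
    have hx := (hD x).ne'
    field_simp [hDdef]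
    ring
  have hg'nonneg : ∀ x, 0 ≤ 1 / 4 - p * Real.exp x * (1 - p) / (D x) ^ 2 := by
    intro x
    rw [sub_nonneg, div_le_iff₀ (pow_pos (hD x) 2)]
    have : D x = 1 - p + p * Real.exp x := rfl
    nlinarith [sq_nonneg (1 - p - p * Real.exp x)]
  have hmono : Monotone g' := by
    apply monotone_of_deriv_nonneg
    · exact fun x => (hg' x).differentiableAt
    · intro x
      rw [(hg' x).deriv]
      exact hg'nonneg x
  have hg'0 : g' 0 = 0 := by
    simp [hg'def, hDdef]
  have hgx : ∀ x, g 0 ≤ g x := by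
    intro x
    rcases le_total 0 x with hx | hx
    · have : MonotoneOn g (Set.Ici 0) := by
        apply monotoneOn_of_deriv_nonneg (convex_Ici 0)
        · exact fun y _ => ((hg y).differentiableAt.continuousAt).continuousWithinAt
        · intro y hy
          exact ((hg y).differentiableAt).differentiableWithinAt
        · intro y hy
          rw [interior_Ici] at hy
          rw [(hg y).deriv]
          rw [← hg'0]
          exact hmono (le_of_lt hy)
      exact this Set.self_mem_Ici hx hx
    · have : AntitoneOn g (Set.Iic 0) := by
        apply antitoneOn_of_deriv_nonpos (convex_Iic 0)
        · exact fun y _ => ((hg y).differentiableAt.continuousAt).continuousWithinAt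
        · intro y hy
          exact ((hg y).differentiableAt).differentiableWithinAt
        · intro y hy
          rw [interior_Iic] at hy
          rw [(hg y).deriv, ← hg'0]
          exact hmono (le_of_lt hy)
      exact this hx Set.self_mem_Iic hx
  have hkey := hgx l
  have hg0 : g 0 = 0 := by simp [hgdef, hDdef]
  rw [hg0, hgdef] at hkey
  simp only [sub_nonneg] at hkey
  have hlog : Real.log (D l) ≤ l * p + l ^ 2 / 8 := by nlinarith
  have := Real.exp_le_exp.mpr hlog
  rw [Real.exp_log (hD l)] at this
  calc p * Real.exp l + (1 - p) = D l := by simp [hDdef]; ring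
    _ ≤ _ := this

lemma binSumOne (n : ℕ) (q : ℝ) (hq : q + (1 - q) = 1) :
    ∑ m ∈ range (n + 1), (n.choose m : ℝ) * q ^ m * (1 - q) ^ (n - m) = 1 := by
  have h := add_pow q (1 - q) n
  rw [hq, one_pow] at h
  calc ∑ m ∈ range (n + 1), (n.choose m : ℝ) * q ^ m * (1 - q) ^ (n - m)
      = ∑ m ∈ range (n + 1), q ^ m * (1 - q) ^ (n - m) * (n.choose m : ℝ) :=
        Finset.sum_congr rfl fun k _ => by ring
    _ = 1 := h.symm

lemma binTail (m : ℕ) {g : ℝ} (hg0 : 0 ≤ g) (hg1 : g ≤ 1) (l a : ℝ)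
    (S : Finset ℕ) (hS : S ⊆ Finset.range (m + 1)) (hla : ∀ k ∈ S, a ≤ l * k) :
    ∑ k ∈ S, (m.choose k : ℝ) * g ^ k * (1 - g) ^ (m - k)
      ≤ Real.exp (-a) * (g * Real.exp l + (1 - g)) ^ m := by
  have hnn : ∀ k, 0 ≤ (m.choose k : ℝ) * g ^ k * (1 - g) ^ (m - k) := by
    intro k
    have h1g : (0:ℝ) ≤ 1 - g := by linarith
    positivity
  calc ∑ k ∈ S, (m.choose k : ℝ) * g ^ k * (1 - g) ^ (m - k)
      ≤ ∑ k ∈ S, Real.exp (l * k - a) * ((m.choose k : ℝ) * g ^ k * (1 - g) ^ (m - k)) := by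
        refine Finset.sum_le_sum fun k hk => ?_
        refine le_mul_of_one_le_left (hnn k) ?_
        rw [Real.one_le_exp_iff]
        linarith [hla k hk]
    _ ≤ ∑ k ∈ range (m + 1),
          Real.exp (l * k - a) * ((m.choose k : ℝ) * g ^ k * (1 - g) ^ (m - k)) := by
        refine Finset.sum_le_sum_of_subset_of_nonneg hS fun k _ _ => ?_
        exact mul_nonneg (Real.exp_pos _).le (hnn k)
    _ = Real.exp (-a) * (g * Real.exp l + (1 - g)) ^ m := by
        rw [add_pow, Finset.mul_sum]
        refine Finset.sum_congr rfl fun k _ => ?_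
        have hex : Real.exp (l * k - a) = Real.exp (-a) * Real.exp l ^ k := by
          rw [← Real.exp_nat_mul, ← Real.exp_add]
          congr 1
          push_cast
          ring
        rw [hex, mul_pow]
        ring

lemma binHoeffding (m : ℕ) (hm : 0 < m) {g : ℝ} (hg0 : 0 ≤ g) (hg1 : g ≤ 1)
    {t : ℝ} (ht : 0 < t) :
    ∑ k ∈ (Finset.range (m + 1)).filter (fun k : ℕ => t < |(k : ℝ) / m - g|),
        (m.choose k : ℝ) * g ^ k * (1 - g) ^ (m - k) ≤ 2 * Real.exp (-(2 * t ^ 2 * m)) := by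
  have hmR : (0:ℝ) < m := by exact_mod_cast hm
  have hnn : ∀ k, 0 ≤ (m.choose k : ℝ) * g ^ k * (1 - g) ^ (m - k) := by
    intro k
    have h1g : (0:ℝ) ≤ 1 - g := by linarith
    positivity
  set S1 := (Finset.range (m + 1)).filter (fun k : ℕ => g * m + t * m < (k : ℝ)) with hS1
  set S2 := (Finset.range (m + 1)).filter (fun k : ℕ => (k : ℝ) < g * m - t * m) with hS2
  have hsub : (Finset.range (m + 1)).filter (fun k : ℕ => t < |(k : ℝ) / m - g|) ⊆ S1 ∪ S2 := by
    intro k hk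
    rw [Finset.mem_filter] at hk
    obtain ⟨hk1, hk2⟩ := hk
    rw [lt_abs] at hk2
    rw [Finset.mem_union, hS1, hS2, Finset.mem_filter, Finset.mem_filter]
    rcases hk2 with h | h
    · left
      refine ⟨hk1, ?_⟩
      have : g + t < (k : ℝ) / m := by linarith
      rw [lt_div_iff₀ hmR] at this
      nlinarith
    · right
      refine ⟨hk1, ?_⟩
      have : (k : ℝ) / m < g - t := by linarith
      rw [div_lt_iff₀ hmR] at this
      nlinarith
  have hdisj : Disjoint S1 S2 := by
    rw [Finset.disjoint_left]
    intro k hk1 hk2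
    rw [hS1, Finset.mem_filter] at hk1
    rw [hS2, Finset.mem_filter] at hk2
    nlinarith [hk1.2, hk2.2]
  have hb1 : ∑ k ∈ S1, (m.choose k : ℝ) * g ^ k * (1 - g) ^ (m - k)
      ≤ Real.exp (-(2 * t ^ 2 * m)) := by
    have h := binTail m hg0 hg1 (4 * t) (4 * t * (g * m + t * m)) S1
      (Finset.filter_subset _ _) (fun k hk => by
        rw [hS1, Finset.mem_filter] at hk
        nlinarith [hk.2])
    refine h.trans ?_
    have hbase : g * Real.exp (4 * t) + (1 - g) ≤ Real.exp (4 * t * g + (4 * t) ^ 2 / 8) :=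
      hoeff_scalar hg0 hg1 (4 * t)
    have hbnn : 0 ≤ g * Real.exp (4 * t) + (1 - g) := by
      have := mul_nonneg hg0 (Real.exp_pos (4 * t)).le
      linarith
    calc Real.exp (-(4 * t * (g * m + t * m))) * (g * Real.exp (4 * t) + (1 - g)) ^ m
        ≤ Real.exp (-(4 * t * (g * m + t * m))) * Real.exp (4 * t * g + (4 * t) ^ 2 / 8) ^ m :=
          mul_le_mul_of_nonneg_left (pow_le_pow_left₀ hbnn hbase m) (Real.exp_pos _).le
      _ = Real.exp (-(2 * t ^ 2 * m)) := by
          rw [← Real.exp_nat_mul, ← Real.exp_add]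
          congr 1
          ring
  have hb2 : ∑ k ∈ S2, (m.choose k : ℝ) * g ^ k * (1 - g) ^ (m - k)
      ≤ Real.exp (-(2 * t ^ 2 * m)) := by
    have h := binTail m hg0 hg1 (-(4 * t)) (-(4 * t) * (g * m - t * m)) S2
      (Finset.filter_subset _ _) (fun k hk => by
        rw [hS2, Finset.mem_filter] at hk
        nlinarith [hk.2])
    refine h.trans ?_
    have hbase : g * Real.exp (-(4 * t)) + (1 - g)
        ≤ Real.exp (-(4 * t) * g + (-(4 * t)) ^ 2 / 8) := hoeff_scalar hg0 hg1 (-(4 * t))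
    have hbnn : 0 ≤ g * Real.exp (-(4 * t)) + (1 - g) := by
      have := mul_nonneg hg0 (Real.exp_pos (-(4 * t))).le
      linarith
    calc Real.exp (-(-(4 * t) * (g * m - t * m))) * (g * Real.exp (-(4 * t)) + (1 - g)) ^ m
        ≤ Real.exp (-(-(4 * t) * (g * m - t * m)))
            * Real.exp (-(4 * t) * g + (-(4 * t)) ^ 2 / 8) ^ m :=
          mul_le_mul_of_nonneg_left (pow_le_pow_left₀ hbnn hbase m) (Real.exp_pos _).le
      _ = Real.exp (-(2 * t ^ 2 * m)) := by
          rw [← Real.exp_nat_mul, ← Real.exp_add]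
          congr 1
          ring
  calc ∑ k ∈ (Finset.range (m + 1)).filter (fun k : ℕ => t < |(k : ℝ) / m - g|),
        (m.choose k : ℝ) * g ^ k * (1 - g) ^ (m - k)
      ≤ ∑ k ∈ S1 ∪ S2, (m.choose k : ℝ) * g ^ k * (1 - g) ^ (m - k) :=
        Finset.sum_le_sum_of_subset_of_nonneg hsub fun k _ _ => hnn k
    _ = (∑ k ∈ S1, (m.choose k : ℝ) * g ^ k * (1 - g) ^ (m - k))
        + ∑ k ∈ S2, (m.choose k : ℝ) * g ^ k * (1 - g) ^ (m - k) :=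
        Finset.sum_union hdisj
    _ ≤ 2 * Real.exp (-(2 * t ^ 2 * m)) := by linarith

lemma chernoffLower (n : ℕ) {q : ℝ} (hq0 : 0 ≤ q) (hq1 : q ≤ 1) :
    ∑ m ∈ (Finset.range (n + 1)).filter (fun m : ℕ => (m : ℝ) ≤ q * n / 2),
        (n.choose m : ℝ) * q ^ m * (1 - q) ^ (n - m) ≤ Real.exp (-(q * n) / 8) := by
  have hlog2 : (0:ℝ) < Real.log 2 := Real.log_pos (by norm_num)
  have h := binTail n hq0 hq1 (-Real.log 2) (-Real.log 2 * (q * n / 2)) _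
    (Finset.filter_subset (fun m : ℕ => (m : ℝ) ≤ q * n / 2) (Finset.range (n + 1)))
    (fun k hk => by
      rw [Finset.mem_filter] at hk
      nlinarith [hk.2])
  refine h.trans ?_
  have hexp : Real.exp (-Real.log 2) = 1 / 2 := by
    rw [Real.exp_neg, Real.exp_log] <;> norm_num
  rw [hexp]
  have hbase : q * (1 / 2) + (1 - q) = 1 - q / 2 := by ring
  rw [hbase]
  have h1 : (0:ℝ) ≤ 1 - q / 2 := by linarith
  have h2 : 1 - q / 2 ≤ Real.exp (-(q / 2)) := by
    nlinarith [Real.add_one_le_exp (-(q / 2))]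
  calc Real.exp (-(-Real.log 2 * (q * n / 2))) * (1 - q / 2) ^ n
      ≤ Real.exp (-(-Real.log 2 * (q * n / 2))) * Real.exp (-(q / 2)) ^ n :=
        mul_le_mul_of_nonneg_left (pow_le_pow_left₀ h1 h2 n) (Real.exp_pos _).le
    _ = Real.exp (Real.log 2 * (q * n / 2) - q * n / 2) := by
        rw [← Real.exp_nat_mul, ← Real.exp_add]
        congr 1
        ring
    _ ≤ Real.exp (-(q * n) / 8) := by
        rw [Real.exp_le_exp]
        nlinarith [Real.log_two_lt_d9, mul_nonneg hq0 (Nat.cast_nonneg n : (0:ℝ) ≤ n)]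

/-- the per-coordinate cell of the atom decomposition -/
def cellAux {𝓩 : Type*} (E F : Set 𝓩) {n : ℕ} (A B : Finset (Fin n)) (i : Fin n) : Set 𝓩 :=
  if i ∈ A then (if i ∈ B then E ∩ F else E \ F) else Eᶜ

set_option maxHeartbeats 2000000 in
/-- concentration of an empirical conditional-probability estimate.
`Z₁,…,Zₙ` are i.i.d. with law `ν`; `E` has probability `q > 0`, `γ = ν(F ∣ E)`, and
`γ̂` is the empirical estimate (with the convention `0/0 = 0`, which is Lean's default).
Then `ℙ(|γ̂ − γ| > t) ≤ exp(−qn/8) + 2 exp(−t²qn)`. -/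
theorem stmt13 {Ω 𝓩 : Type*} [MeasurableSpace Ω] [MeasurableSpace 𝓩]
    (μ : Measure Ω) [IsProbabilityMeasure μ]
    (ν : Measure 𝓩) [IsProbabilityMeasure ν]
    (n : ℕ) (Z : Fin n → Ω → 𝓩)
    (hmeas : ∀ i, Measurable (Z i))
    (hindep : iIndepFun Z μ)
    (hlaw : ∀ i, μ.map (Z i) = ν)
    (E F : Set 𝓩) (hE : MeasurableSet E) (hF : MeasurableSet F)
    (q γ : ℝ) (hq : q = (ν E).toReal) (hq0 : 0 < q)
    (hγ : γ = (ν (E ∩ F)).toReal / q)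
    (γhat : Ω → ℝ)
    (hγhat : ∀ ω, γhat ω =
      ((Finset.univ.filter fun i => Z i ω ∈ E ∩ F).card : ℝ) /
      ((Finset.univ.filter fun i => Z i ω ∈ E).card : ℝ))
    (t : ℝ) (ht : 0 < t) :
    μ {ω | t < |γhat ω - γ|} ≤
      ENNReal.ofReal (Real.exp (-(q * n)/8) + 2 * Real.exp (-(t^2 * q * n))) := by
  classical
  -- real-valued weights
  set w1 : ℝ := (ν (E ∩ F)).toReal with hw1def
  set w2 : ℝ := (ν (E \ F)).toReal with hw2def
  set w3 : ℝ := (ν Eᶜ).toReal with hw3def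
  have hw1nn : 0 ≤ w1 := ENNReal.toReal_nonneg
  have hw2nn : 0 ≤ w2 := ENNReal.toReal_nonneg
  have hw3nn : 0 ≤ w3 := ENNReal.toReal_nonneg
  have hq1 : q ≤ 1 := by
    rw [hq]
    have h := prob_le_one (μ := ν) (s := E)
    have := ENNReal.toReal_mono (by norm_num) h
    simpa using this
  have hw12 : w1 + w2 = q := by
    have h := measure_inter_add_diff (μ := ν) E hF
    have h2 := congrArg ENNReal.toReal h
    rw [ENNReal.toReal_add (measure_ne_top ν _) (measure_ne_top ν _)] at h2
    rw [hw1def, hw2def, hq]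
    exact h2
  have hw1 : w1 = γ * q := by
    rw [hγ]
    field_simp
  have hγ0 : 0 ≤ γ := by
    rw [hγ]
    exact div_nonneg ENNReal.toReal_nonneg hq0.le
  have hγ1 : γ ≤ 1 := by
    rw [hγ, div_le_one hq0]
    linarith [hw2nn, hw12]
  have hw2 : w2 = (1 - γ) * q := by nlinarith [hw12, hw1]
  have hw3 : w3 = 1 - q := by
    have h := measure_add_measure_compl (μ := ν) hE
    rw [measure_univ] at h
    have h2 := congrArg ENNReal.toReal h
    rw [ENNReal.toReal_add (measure_ne_top ν _) (measure_ne_top ν _)] at h2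
    rw [← hq] at h2
    simp only [ENNReal.toReal_one] at h2
    rw [hw3def]
    linarith
  -- atoms
  have hcellm : ∀ (A B : Finset (Fin n)) i, MeasurableSet (cellAux E F A B i) := by
    intro A B i
    unfold cellAux
    split_ifs
    · exact hE.inter hF
    · exact hE.diff hF
    · exact hE.compl
  set P : Finset (Finset (Fin n) × Finset (Fin n)) :=
    Finset.univ.filter (fun AB => AB.2 ⊆ AB.1 ∧ t < |(AB.2.card : ℝ) / (AB.1.card : ℝ) - γ|)
    with hPdef
  -- coverage
  have hcover : {ω | t < |γhat ω - γ|} ⊆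
      ⋃ AB ∈ (P : Set (Finset (Fin n) × Finset (Fin n))), ⋂ i, Z i ⁻¹' cellAux E F AB.1 AB.2 i := by
    intro ω hω
    set A := Finset.univ.filter (fun i => Z i ω ∈ E) with hA
    set B := Finset.univ.filter (fun i => Z i ω ∈ E ∩ F) with hB
    have hBA : B ⊆ A := by
      intro i hi
      rw [hB, Finset.mem_filter] at hi
      rw [hA, Finset.mem_filter]
      exact ⟨Finset.mem_univ i, hi.2.1⟩
    have hmem : (A, B) ∈ P := by
      rw [hPdef, Finset.mem_filter]
      refine ⟨Finset.mem_univ _, hBA, ?_⟩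
      rw [Set.mem_setOf_eq, hγhat ω] at hω
      exact hω
    refine Set.mem_biUnion hmem ?_
    rw [Set.mem_iInter]
    intro i
    rw [Set.mem_preimage]
    unfold cellAux
    by_cases hiE : Z i ω ∈ E
    · have hiA : i ∈ A := by rw [hA, Finset.mem_filter]; exact ⟨Finset.mem_univ i, hiE⟩
      by_cases hiF : Z i ω ∈ F
      · have hiB : i ∈ B := by
          rw [hB, Finset.mem_filter]; exact ⟨Finset.mem_univ i, hiE, hiF⟩
        simp [hiA, hiB, hiE, hiF]
      · have hiB : i ∉ B := by
          rw [hB, Finset.mem_filter]; rintro ⟨-, -, h⟩; exact hiF h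
        simp [hiA, hiB, hiE, hiF]
    · have hiA : i ∉ A := by rw [hA, Finset.mem_filter]; rintro ⟨-, h⟩; exact hiE h
      have hiB : i ∉ B := by rw [hB, Finset.mem_filter]; rintro ⟨-, h, -⟩; exact hiE h
      simp [hiA, hiB, hiE]
  -- measure of an atom
  have hatom : ∀ A B : Finset (Fin n),
      μ (⋂ i, Z i ⁻¹' cellAux E F A B i) = ∏ i, ν (cellAux E F A B i) := by
    intro A B
    have h := hindep.meas_iInter (s := fun i => Z i ⁻¹' cellAux E F A B i)
      (fun i => ⟨cellAux E F A B i, hcellm A B i, rfl⟩)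
    rw [h]
    exact Finset.prod_congr rfl fun i _ => by
      rw [← hlaw i, Measure.map_apply (hmeas i) (hcellm A B i)]
  -- value of the product
  have hprodval : ∀ A B : Finset (Fin n), B ⊆ A →
      (∏ i, ν (cellAux E F A B i)) =
        ENNReal.ofReal (w1 ^ B.card * w2 ^ (A.card - B.card) * w3 ^ (n - A.card)) := by
    intro A B hBA
    have h1 : (∏ i, ν (cellAux E F A B i)) =
        (ν (E ∩ F)) ^ B.card * (ν (E \ F)) ^ (A.card - B.card) * (ν Eᶜ) ^ (n - A.card) := by
      rw [← Finset.prod_mul_prod_compl A]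
      have hA : ∏ i ∈ A, ν (cellAux E F A B i)
          = (ν (E ∩ F)) ^ B.card * (ν (E \ F)) ^ (A.card - B.card) := by
        rw [← Finset.prod_sdiff hBA]
        have e1 : ∏ i ∈ A \ B, ν (cellAux E F A B i) = (ν (E \ F)) ^ (A.card - B.card) := by
          rw [← Finset.card_sdiff_of_subset hBA, ← Finset.prod_const]
          refine Finset.prod_congr rfl fun i hi => ?_
          rw [Finset.mem_sdiff] at hi
          unfold cellAux
          rw [if_pos hi.1, if_neg hi.2]
        have e2 : ∏ i ∈ B, ν (cellAux E F A B i) = (ν (E ∩ F)) ^ B.card := by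
          rw [← Finset.prod_const]
          refine Finset.prod_congr rfl fun i hi => ?_
          unfold cellAux
          rw [if_pos (hBA hi), if_pos hi]
        rw [e1, e2]
        ring
      have hAc : ∏ i ∈ Aᶜ, ν (cellAux E F A B i) = (ν Eᶜ) ^ (n - A.card) := by
        have : (Aᶜ : Finset (Fin n)).card = n - A.card := by
          rw [Finset.card_compl]
          simp
        rw [← this, ← Finset.prod_const]
        refine Finset.prod_congr rfl fun i hi => ?_
        rw [Finset.mem_compl] at hi
        unfold cellAux
        rw [if_neg hi]
      rw [hA, hAc]
    rw [h1]
    rw [ENNReal.ofReal_mul (by positivity), ENNReal.ofReal_mul (by positivity),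
      ENNReal.ofReal_pow hw1nn, ENNReal.ofReal_pow hw2nn, ENNReal.ofReal_pow hw3nn,
      hw1def, hw2def, hw3def,
      ENNReal.ofReal_toReal (measure_ne_top ν _), ENNReal.ofReal_toReal (measure_ne_top ν _),
      ENNReal.ofReal_toReal (measure_ne_top ν _)]
  -- main chain in ENNReal
  have hchain : μ {ω | t < |γhat ω - γ|} ≤
      ENNReal.ofReal (∑ AB ∈ P,
        w1 ^ AB.2.card * w2 ^ (AB.1.card - AB.2.card) * w3 ^ (n - AB.1.card)) := by
    calc μ {ω | t < |γhat ω - γ|}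
        ≤ μ (⋃ AB ∈ (P : Set (Finset (Fin n) × Finset (Fin n))),
            ⋂ i, Z i ⁻¹' cellAux E F AB.1 AB.2 i) := measure_mono hcover
      _ ≤ ∑ AB ∈ P, μ (⋂ i, Z i ⁻¹' cellAux E F AB.1 AB.2 i) :=
          measure_biUnion_finset_le P _
      _ = ∑ AB ∈ P, ENNReal.ofReal
            (w1 ^ AB.2.card * w2 ^ (AB.1.card - AB.2.card) * w3 ^ (n - AB.1.card)) := by
          refine Finset.sum_congr rfl fun AB hAB => ?_
          rw [hPdef, Finset.mem_filter] at hAB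
          rw [hatom AB.1 AB.2, hprodval AB.1 AB.2 hAB.2.1]
      _ = ENNReal.ofReal (∑ AB ∈ P,
            w1 ^ AB.2.card * w2 ^ (AB.1.card - AB.2.card) * w3 ^ (n - AB.1.card)) := by
          rw [ENNReal.ofReal_sum_of_nonneg (fun AB _ => by positivity)]
  refine hchain.trans (ENNReal.ofReal_le_ofReal ?_)
  -- now a purely real-valued estimate
  set J : ℕ → ℝ := fun m => ∑ k ∈ range (m + 1),
      (m.choose k : ℝ) * (if t < |(k : ℝ) / (m : ℝ) - γ| then γ ^ k * (1 - γ) ^ (m - k) else 0)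
    with hJdef
  have h1q : (0:ℝ) ≤ 1 - q := by linarith
  have h1γ : (0:ℝ) ≤ 1 - γ := by linarith
  have hinner : ∀ A : Finset (Fin n),
      (∑ B : Finset (Fin n), if B ⊆ A ∧ t < |(B.card : ℝ) / (A.card : ℝ) - γ| then
          w1 ^ B.card * w2 ^ (A.card - B.card) * w3 ^ (n - A.card) else 0)
      = (1 - q) ^ (n - A.card) * (q ^ A.card * J A.card) := by
    intro A
    calc (∑ B : Finset (Fin n), if B ⊆ A ∧ t < |(B.card : ℝ) / (A.card : ℝ) - γ| then
            w1 ^ B.card * w2 ^ (A.card - B.card) * w3 ^ (n - A.card) else 0)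
        = ∑ B : Finset (Fin n), if B ⊆ A then (if t < |(B.card : ℝ) / (A.card : ℝ) - γ| then
            w1 ^ B.card * w2 ^ (A.card - B.card) * w3 ^ (n - A.card) else 0) else 0 :=
          Finset.sum_congr rfl fun B _ => ite_and _ _ _ _
      _ = ∑ B ∈ Finset.univ.filter (fun B => B ⊆ A),
            (if t < |(B.card : ℝ) / (A.card : ℝ) - γ| then
            w1 ^ B.card * w2 ^ (A.card - B.card) * w3 ^ (n - A.card) else 0) :=
          (Finset.sum_filter _ _).symm
      _ = ∑ B ∈ A.powerset, (fun k : ℕ => if t < |(k : ℝ) / (A.card : ℝ) - γ| then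
            w1 ^ k * w2 ^ (A.card - k) * w3 ^ (n - A.card) else 0) B.card := by
          congr 1
          ext B
          simp [Finset.mem_powerset]
      _ = ∑ k ∈ range (A.card + 1), (A.card).choose k •
            (if t < |(k : ℝ) / (A.card : ℝ) - γ| then
            w1 ^ k * w2 ^ (A.card - k) * w3 ^ (n - A.card) else 0) :=
          Finset.sum_powerset_apply_card
            (f := fun k : ℕ => if t < |(k : ℝ) / (A.card : ℝ) - γ| then
              w1 ^ k * w2 ^ (A.card - k) * w3 ^ (n - A.card) else 0) (x := A)
      _ = (1 - q) ^ (n - A.card) * (q ^ A.card * J A.card) := by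
          rw [hJdef]
          simp only [Finset.mul_sum]
          refine Finset.sum_congr rfl fun k hk => ?_
          have hk' : k ≤ A.card := Nat.lt_succ_iff.mp (Finset.mem_range.mp hk)
          rw [nsmul_eq_mul]
          split_ifs with hcond
          · rw [hw1, hw2, hw3]
            have hqq : q ^ k * q ^ (A.card - k) = q ^ A.card := by
              rw [← pow_add, Nat.add_sub_cancel' hk']
            calc ((A.card).choose k : ℝ) *
                  ((γ * q) ^ k * ((1 - γ) * q) ^ (A.card - k) * (1 - q) ^ (n - A.card))
                = (1 - q) ^ (n - A.card) *
                    ((q ^ k * q ^ (A.card - k)) *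
                      (((A.card).choose k : ℝ) * (γ ^ k * (1 - γ) ^ (A.card - k)))) := by
                  rw [mul_pow, mul_pow]; ring
              _ = (1 - q) ^ (n - A.card) *
                    (q ^ A.card * (((A.card).choose k : ℝ) * (γ ^ k * (1 - γ) ^ (A.card - k)))) := by
                  rw [hqq]
              _ = _ := by ring
          · ring
  have hstep1 : (∑ AB ∈ P, w1 ^ AB.2.card * w2 ^ (AB.1.card - AB.2.card) * w3 ^ (n - AB.1.card))
      = ∑ m ∈ range (n + 1), (n.choose m : ℝ) * ((1 - q) ^ (n - m) * (q ^ m * J m)) := by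
    rw [hPdef, Finset.sum_filter, ← Finset.univ_product_univ, Finset.sum_product]
    calc (∑ A : Finset (Fin n), ∑ B : Finset (Fin n),
            if B ⊆ A ∧ t < |(B.card : ℝ) / (A.card : ℝ) - γ| then
              w1 ^ B.card * w2 ^ (A.card - B.card) * w3 ^ (n - A.card) else 0)
        = ∑ A : Finset (Fin n),
            (fun m : ℕ => (1 - q) ^ (n - m) * (q ^ m * J m)) A.card :=
          Finset.sum_congr rfl fun A _ => hinner A
      _ = ∑ A ∈ (Finset.univ : Finset (Fin n)).powerset,
            (fun m : ℕ => (1 - q) ^ (n - m) * (q ^ m * J m)) A.card := by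
          rw [Finset.powerset_univ]
      _ = ∑ m ∈ range ((Finset.univ : Finset (Fin n)).card + 1),
            (Finset.univ : Finset (Fin n)).card.choose m •
              ((1 - q) ^ (n - m) * (q ^ m * J m)) :=
          Finset.sum_powerset_apply_card
            (f := fun m : ℕ => (1 - q) ^ (n - m) * (q ^ m * J m))
            (x := (Finset.univ : Finset (Fin n)))
      _ = _ := by
          simp only [Finset.card_univ, Fintype.card_fin, nsmul_eq_mul]
  rw [hstep1]
  have hJnn : ∀ m, 0 ≤ J m := by
    intro m
    refine Finset.sum_nonneg fun k _ => ?_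
    have : (0:ℝ) ≤ if t < |(k : ℝ) / (m : ℝ) - γ| then γ ^ k * (1 - γ) ^ (m - k) else 0 := by
      split_ifs
      · positivity
      · exact le_rfl
    positivity
  have hJle1 : ∀ m, J m ≤ 1 := by
    intro m
    calc J m ≤ ∑ k ∈ range (m + 1), (m.choose k : ℝ) * γ ^ k * (1 - γ) ^ (m - k) := by
          refine Finset.sum_le_sum fun k _ => ?_
          split_ifs
          · exact le_of_eq (by ring)
          · simp only [mul_zero]
            positivity
      _ = 1 := binSumOne m γ (by ring)
  have hJ2 : ∀ m : ℕ, q * n / 2 < (m : ℝ) → J m ≤ 2 * Real.exp (-(t ^ 2 * q * n)) := by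
    intro m hm
    have hm0 : 0 < m := by
      rcases Nat.eq_zero_or_pos m with h | h
      · subst h
        simp only [Nat.cast_zero] at hm
        nlinarith [Nat.cast_nonneg (α := ℝ) n]
      · exact h
    have hJeq : J m = ∑ k ∈ (Finset.range (m + 1)).filter
        (fun k : ℕ => t < |(k : ℝ) / m - γ|),
        (m.choose k : ℝ) * γ ^ k * (1 - γ) ^ (m - k) := by
      rw [hJdef, Finset.sum_filter]
      refine Finset.sum_congr rfl fun k _ => ?_
      split_ifs
      · ring
      · ring
    rw [hJeq]
    refine (binHoeffding m hm0 hγ0 hγ1 ht).trans ?_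
    have harg : -(2 * t ^ 2 * m) ≤ -(t ^ 2 * q * n) := by
      nlinarith [sq_nonneg t]
    nlinarith [Real.exp_le_exp.mpr harg, Real.exp_pos (-(2 * t ^ 2 * (m:ℝ)))]
  rw [← Finset.sum_filter_add_sum_filter_not (range (n + 1))
    (fun m : ℕ => (m : ℝ) ≤ q * n / 2)]
  have hpart1 : (∑ m ∈ (range (n + 1)).filter (fun m : ℕ => (m : ℝ) ≤ q * n / 2),
      (n.choose m : ℝ) * ((1 - q) ^ (n - m) * (q ^ m * J m))) ≤ Real.exp (-(q * n) / 8) := by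
    refine le_trans (Finset.sum_le_sum fun m _ => ?_) (chernoffLower n hq0.le hq1)
    have h2 : (1 - q) ^ (n - m) * (q ^ m * J m) ≤ (1 - q) ^ (n - m) * (q ^ m * 1) := by
      refine mul_le_mul_of_nonneg_left ?_ (pow_nonneg h1q _)
      exact mul_le_mul_of_nonneg_left (hJle1 m) (pow_nonneg hq0.le _)
    calc (n.choose m : ℝ) * ((1 - q) ^ (n - m) * (q ^ m * J m))
        ≤ (n.choose m : ℝ) * ((1 - q) ^ (n - m) * (q ^ m * 1)) :=
          mul_le_mul_of_nonneg_left h2 (Nat.cast_nonneg _)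
      _ = (n.choose m : ℝ) * q ^ m * (1 - q) ^ (n - m) := by ring
  have hpart2 : (∑ m ∈ (range (n + 1)).filter (fun m : ℕ => ¬ ((m : ℝ) ≤ q * n / 2)),
      (n.choose m : ℝ) * ((1 - q) ^ (n - m) * (q ^ m * J m)))
      ≤ 2 * Real.exp (-(t ^ 2 * q * n)) := by
    have hterm : ∀ m ∈ (range (n + 1)).filter (fun m : ℕ => ¬ ((m : ℝ) ≤ q * n / 2)),
        (n.choose m : ℝ) * ((1 - q) ^ (n - m) * (q ^ m * J m))
        ≤ (2 * Real.exp (-(t ^ 2 * q * n))) * ((n.choose m : ℝ) * q ^ m * (1 - q) ^ (n - m)) := by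
      intro m hm
      rw [Finset.mem_filter] at hm
      have hgt : q * n / 2 < (m : ℝ) := lt_of_not_ge hm.2
      have h2 : (1 - q) ^ (n - m) * (q ^ m * J m)
          ≤ (1 - q) ^ (n - m) * (q ^ m * (2 * Real.exp (-(t ^ 2 * q * n)))) := by
        refine mul_le_mul_of_nonneg_left ?_ (pow_nonneg h1q _)
        exact mul_le_mul_of_nonneg_left (hJ2 m hgt) (pow_nonneg hq0.le _)
      calc (n.choose m : ℝ) * ((1 - q) ^ (n - m) * (q ^ m * J m))
          ≤ (n.choose m : ℝ) * ((1 - q) ^ (n - m) * (q ^ m * (2 * Real.exp (-(t ^ 2 * q * n))))) :=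
            mul_le_mul_of_nonneg_left h2 (Nat.cast_nonneg _)
        _ = (2 * Real.exp (-(t ^ 2 * q * n))) * ((n.choose m : ℝ) * q ^ m * (1 - q) ^ (n - m)) := by
            ring
    refine le_trans (Finset.sum_le_sum hterm) ?_
    rw [← Finset.mul_sum]
    have hsum : (∑ m ∈ (range (n + 1)).filter (fun m : ℕ => ¬ ((m : ℝ) ≤ q * n / 2)),
        (n.choose m : ℝ) * q ^ m * (1 - q) ^ (n - m)) ≤ 1 := by
      have hone : q + (1 - q) = 1 := by ring
      refine le_trans ?_ (le_of_eq (binSumOne n q hone))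
      exact Finset.sum_le_sum_of_subset_of_nonneg
        (Finset.filter_subset (fun m : ℕ => ¬ ((m : ℝ) ≤ q * n / 2)) (range (n + 1)))
        (fun m _ _ => by positivity)
    calc (2 * Real.exp (-(t ^ 2 * q * n))) *
          (∑ m ∈ (range (n + 1)).filter (fun m : ℕ => ¬ ((m : ℝ) ≤ q * n / 2)),
            (n.choose m : ℝ) * q ^ m * (1 - q) ^ (n - m))
        ≤ (2 * Real.exp (-(t ^ 2 * q * n))) * 1 :=
          mul_le_mul_of_nonneg_left hsum (by positivity)
      _ = 2 * Real.exp (-(t ^ 2 * q * n)) := by ring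
  linarith [hpart1, hpart2]
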